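/- For f, g in a Hilbert space H, viewing H as the one-particle subspace of the symmetric Fock space Γ(H), the refined estimate ‖ε(f) − ε(g) − (f − g)‖ ≤ ‖f − g‖ (‖f‖ + ‖g‖) exp(½(‖f‖ + ‖g‖)²) holds. -/

import Mathlib

open scoped InnerProductSpace Nat

/-- Telescoping bound for powers. -/
lemma pow_sub_pow_abs_bound (α β t : ℝ) (hα : 0 ≤ α) (hβ : 0 ≤ β) (ht : 0 ≤ t)
    (z : ℂ) (hz : ‖z‖ ≤ α * β)
    (hb : ‖(((β:ℂ)^2) - z)‖ ≤ β * t) :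
    ∀ n : ℕ, ‖(z ^ (n+1) - ((β:ℂ)^2) ^ (n+1))‖ ≤ t * β ^ (n+1) * (α + β) ^ n := by
  have hb' : ‖(z - (β:ℂ)^2)‖ ≤ β * t := by
    rwa [norm_sub_rev] at hb
  intro n
  induction n with
  | zero => simpa [mul_comm] using hb'
  | succ n ih =>
    have key : z ^ (n+2) - ((β:ℂ)^2) ^ (n+2)
        = z * (z ^ (n+1) - ((β:ℂ)^2) ^ (n+1)) + (z - (β:ℂ)^2) * ((β:ℂ)^2) ^ (n+1) := by
      ring
    have h1 : ‖(z * (z ^ (n+1) - ((β:ℂ)^2) ^ (n+1)))‖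
        ≤ (α*β) * (t * β ^ (n+1) * (α + β) ^ n) := by
      rw [norm_mul]
      exact mul_le_mul hz ih (norm_nonneg _) (by positivity)
    have h2 : ‖((z - (β:ℂ)^2) * ((β:ℂ)^2) ^ (n+1))‖
        ≤ (β * t) * (β^2) ^ (n+1) := by
      rw [norm_mul, norm_pow]
      have : ‖((β:ℂ)^2)‖ = β^2 := by
        rw [← Complex.ofReal_pow]; exact Complex.norm_of_nonneg (by positivity)
      rw [this]
      exact mul_le_mul_of_nonneg_right hb' (by positivity)
    calc ‖(z ^ (n+2) - ((β:ℂ)^2) ^ (n+2))‖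
        ≤ ‖(z * (z ^ (n+1) - ((β:ℂ)^2) ^ (n+1)))‖
          + ‖((z - (β:ℂ)^2) * ((β:ℂ)^2) ^ (n+1))‖ := by
          rw [key]; exact norm_add_le _ _
      _ ≤ (α*β) * (t * β ^ (n+1) * (α + β) ^ n) + (β * t) * (β^2) ^ (n+1) := add_le_add h1 h2
      _ ≤ t * β ^ (n+2) * (α + β) ^ (n+1) := by
          have hβn : β ^ n ≤ (α+β) ^ n := pow_le_pow_left₀ hβ (by linarith) _
          have e1 : β^(n+1) = β * β^n := by ring
          have e2 : β^(n+2) = β^2 * β^n := by ring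
          have e3 : ((β:ℝ)^2)^(n+1) = β^2 * (β^n * β^n) := by ring
          have e4 : (α+β)^(n+1) = (α+β) * (α+β)^n := by ring
          rw [e1, e2, e3, e4]
          have hint : (t*β^2*β^n*β)*(β^n) ≤ (t*β^2*β^n*β)*((α+β)^n) :=
            mul_le_mul_of_nonneg_left hβn (by positivity)
          nlinarith [mul_nonneg (mul_nonneg (mul_nonneg ht (sq_nonneg β)) (pow_nonneg hβ n)) hα,
            pow_nonneg (by linarith : (0:ℝ) ≤ α+β) n, pow_nonneg hβ n]

lemma core_estimate (α β t : ℝ) (hα : 0 ≤ α) (hβ : 0 ≤ β) (ht : 0 ≤ t)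
    (z : ℂ) (hz : ‖z‖ ≤ α * β)
    (hs : α^2 + β^2 - 2*z.re = t^2) :
    Real.exp (α^2) + Real.exp (β^2) - 2*(Complex.exp z).re - t^2
      ≤ t^2 * (α+β)^2 * Real.exp ((α+β)^2) := by
  have hzsq : (‖z‖)^2 ≤ (α*β)^2 := pow_le_pow_left₀ (norm_nonneg z) hz 2
  have hznormSq : z.re^2 + z.im^2 ≤ (α*β)^2 := by
    rw [Complex.sq_norm, Complex.normSq_apply] at hzsq
    nlinarith [hzsq]
  have ha_abs : ‖(((α^2:ℝ):ℂ) - z)‖ ≤ α * t := by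
    have h1 : (‖(((α^2:ℝ):ℂ) - z)‖)^2 ≤ (α*t)^2 := by
      rw [Complex.sq_norm, Complex.normSq_apply]
      simp only [Complex.sub_re, Complex.sub_im, Complex.ofReal_re, Complex.ofReal_im]
      nlinarith [hznormSq]
    nlinarith [norm_nonneg (((α^2:ℝ):ℂ) - z), mul_nonneg hα ht, h1]
  have hb_abs : ‖(((β^2:ℝ):ℂ) - z)‖ ≤ β * t := by
    have h1 : (‖(((β^2:ℝ):ℂ) - z)‖)^2 ≤ (β*t)^2 := by
      rw [Complex.sq_norm, Complex.normSq_apply]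
      simp only [Complex.sub_re, Complex.sub_im, Complex.ofReal_re, Complex.ofReal_im]
      nlinarith [hznormSq]
    nlinarith [norm_nonneg (((β^2:ℝ):ℂ) - z), mul_nonneg hβ ht, h1]
  have hb_abs' : ‖(((β:ℂ))^2 - z)‖ ≤ β * t := by
    have : ((β:ℂ))^2 = ((β^2:ℝ):ℂ) := by push_cast; ring
    rwa [this]
  have hzn := pow_sub_pow_abs_bound α β t hα hβ ht z hz hb_abs'
  have hzn' : ∀ n : ℕ, ‖(z ^ (n+1) - ((β^2:ℝ):ℂ) ^ (n+1))‖
      ≤ t * β ^ (n+1) * (α + β) ^ n := by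
    intro n
    have : ((β^2:ℝ):ℂ) = ((β:ℂ))^2 := by push_cast; ring
    rw [this]; exact hzn n
  set c : ℕ → ℝ := fun n => (α^2)^n + (β^2)^n - 2*(z^n).re with hc
  -- key recursive bound
  have hkey : ∀ n : ℕ, c (n+1) ≤ t^2 * ((α+β)^2)^n := by
    intro n
    induction n with
    | zero => norm_num [hc]; linarith
    | succ n ih =>
      -- recursion identity
      have hrec : c (n+2) = (α^2)*(c (n+1)) + (α^2+β^2-2*z.re)*(β^2)^(n+1)
          + 2*((((α^2:ℝ):ℂ)-z)*(z^(n+1)-((β^2:ℝ):ℂ)^(n+1))).re := by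
        have cid : ((α^2:ℝ):ℂ)^(n+2) + ((β^2:ℝ):ℂ)^(n+2) - 2*z^(n+2)
            = ((α^2:ℝ):ℂ)*(((α^2:ℝ):ℂ)^(n+1)+((β^2:ℝ):ℂ)^(n+1)-2*z^(n+1))
              + (((α^2:ℝ):ℂ)+((β^2:ℝ):ℂ)-2*z)*((β^2:ℝ):ℂ)^(n+1)
              + 2*((((α^2:ℝ):ℂ)-z)*(z^(n+1)-((β^2:ℝ):ℂ)^(n+1))) := by ring
        have cre := congrArg Complex.re cid
        simp only [hc, Complex.add_re, Complex.sub_re, Complex.mul_re, Complex.add_im,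
          Complex.sub_im, Complex.mul_im, ← Complex.ofReal_pow, Complex.ofReal_re,
          Complex.ofReal_im, Complex.re_ofNat, Complex.im_ofNat] at cre ⊢
        linarith [cre]
      have hprod : ((((α^2:ℝ):ℂ)-z)*(z^(n+1)-((β^2:ℝ):ℂ)^(n+1))).re
          ≤ (α*t)*(t * β^(n+1) * (α+β)^n) := by
        calc ((((α^2:ℝ):ℂ)-z)*(z^(n+1)-((β^2:ℝ):ℂ)^(n+1))).re
            ≤ ‖((((α^2:ℝ):ℂ)-z)*(z^(n+1)-((β^2:ℝ):ℂ)^(n+1)))‖ :=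
            Complex.re_le_norm _
          _ = ‖(((α^2:ℝ):ℂ)-z)‖ * ‖(z^(n+1)-((β^2:ℝ):ℂ)^(n+1))‖ :=
            norm_mul _ _
          _ ≤ (α*t)*(t * β^(n+1) * (α+β)^n) :=
            mul_le_mul ha_abs (hzn' n) (norm_nonneg _) (by positivity)
      rw [hs] at hrec
      have step : c (n+2) ≤ (α^2)*(t^2*((α+β)^2)^n) + t^2*(β^2)^(n+1)
          + 2*((α*t)*(t * β^(n+1) * (α+β)^n)) := by
        rw [hrec]
        have h2 : (α^2)*(c (n+1)) ≤ (α^2)*(t^2*((α+β)^2)^n) :=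
          mul_le_mul_of_nonneg_left ih (by positivity)
        linarith [hprod]
      -- now the algebra
      have hβn : β ^ n ≤ (α+β) ^ n := pow_le_pow_left₀ hβ (by linarith) _
      have e1 : ((β:ℝ)^2)^(n+1) = (β*β^n) * (β*β^n) := by
        rw [← pow_mul, mul_comm 2 (n+1), pow_mul, pow_two]; ring
      have e2 : β^(n+1) = β * β^n := by ring
      have e3 : ((α+β)^2)^(n+1) = ((α+β)*(α+β)^n) * ((α+β)*(α+β)^n) := by
        rw [← pow_mul, mul_comm 2 (n+1), pow_mul, pow_two]; ring
      have e4 : ((α+β)^2)^n = (α+β)^n * (α+β)^n := by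
        rw [← pow_mul, mul_comm 2 n, pow_mul, pow_two]
      rw [e1, e2, e4] at step
      rw [e3]
      have hQ : (0:ℝ) ≤ (α+β)^n := by positivity
      have h5 : β*β^n ≤ β*(α+β)^n := mul_le_mul_of_nonneg_left hβn hβ
      have h6 : α*(α+β)^n + β*β^n ≤ (α+β)*(α+β)^n := by
        have expand : (α+β)*(α+β)^n = α*(α+β)^n + β*(α+β)^n := by ring
        rw [expand]; linarith [h5]
      have h7 : (α*(α+β)^n + β*β^n)^2 ≤ ((α+β)*(α+β)^n)^2 :=
        pow_le_pow_left₀ (by positivity) h6 2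
      have h8 : t^2*((α*(α+β)^n + β*β^n)^2) ≤ t^2*(((α+β)*(α+β)^n)^2) :=
        mul_le_mul_of_nonneg_left h7 (sq_nonneg t)
      calc c (n+2)
          ≤ α^2*(t^2*((α+β)^n*(α+β)^n)) + t^2*((β*β^n)*(β*β^n))
            + 2*(α*t*(t*(β*β^n)*(α+β)^n)) := step
        _ = t^2*((α*(α+β)^n + β*β^n)^2) := by ring
        _ ≤ t^2*(((α+β)*(α+β)^n)^2) := h8
        _ = t^2*(((α+β)*(α+β)^n)*((α+β)*(α+β)^n)) := by ring
  -- series representations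
  have hA : HasSum (fun n : ℕ => (α^2)^n / n !) (Real.exp (α^2)) := by
    rw [Real.exp_eq_exp_ℝ]; exact NormedSpace.expSeries_div_hasSum_exp (α^2)
  have hB : HasSum (fun n : ℕ => (β^2)^n / n !) (Real.exp (β^2)) := by
    rw [Real.exp_eq_exp_ℝ]; exact NormedSpace.expSeries_div_hasSum_exp (β^2)
  have hZ : HasSum (fun n : ℕ => z^n / n !) (Complex.exp z) := by
    rw [Complex.exp_eq_exp_ℂ]; exact NormedSpace.expSeries_div_hasSum_exp z
  have hZre : HasSum (fun n : ℕ => (z^n).re / n !) ((Complex.exp z).re) := by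
    have h := Complex.reCLM.hasSum hZ
    simp only [Complex.reCLM_apply] at h
    convert h using 2 with n
    rw [show ((n ! : ℕ) : ℂ) = (((n ! : ℕ) : ℝ) : ℂ) by norm_cast, Complex.div_ofReal_re]
  have hT : HasSum (fun n : ℕ => c n / n !) (Real.exp (α^2) + Real.exp (β^2)
      - 2*(Complex.exp z).re) := by
    have h := (hA.add hB).sub (hZre.mul_left 2)
    convert h using 2 with n
    · rfl
    simp only [hc]
    field_simp
  -- shift by two
  have hsum01 : (∑ i ∈ Finset.range 2, c i / (i ! : ℝ)) = t^2 := by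
    have hc0 : c 0 = 0 := by norm_num [hc]
    have hc1 : c 1 = t^2 := by norm_num [hc]; linarith
    rw [Finset.sum_range_succ, Finset.sum_range_one, hc0, hc1]
    norm_num
  have hT2 : HasSum (fun n : ℕ => c (n+2) / (Nat.factorial (n+2) : ℝ))
      ((Real.exp (α^2) + Real.exp (β^2) - 2*(Complex.exp z).re) - t^2) := by
    rw [← hsum01]
    exact (hasSum_nat_add_iff' 2).mpr hT
  -- the dominating series
  have hR : HasSum (fun n : ℕ => (t^2*(α+β)^2) * (((α+β)^2)^n / n !))
      ((t^2*(α+β)^2) * Real.exp ((α+β)^2)) := by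
    have : HasSum (fun n : ℕ => ((α+β)^2)^n / n !) (Real.exp ((α+β)^2)) := by
      rw [Real.exp_eq_exp_ℝ]; exact NormedSpace.expSeries_div_hasSum_exp ((α+β)^2)
    exact this.mul_left _
  have hbound : ∀ n : ℕ, c (n+2) / (Nat.factorial (n+2) : ℝ) ≤ (t^2*(α+β)^2) * (((α+β)^2)^n / n !) := by
    intro n
    have hfac1 : (0:ℝ) < (n ! : ℝ) := by exact_mod_cast Nat.factorial_pos n
    have hfac2 : (n ! : ℝ) ≤ (Nat.factorial (n+2) : ℝ) := by
      exact_mod_cast Nat.factorial_le (by omega)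
    have hnum : c (n+2) ≤ (t^2*(α+β)^2) * ((α+β)^2)^n := by
      have := hkey (n+1)
      calc c (n+2) ≤ t^2 * ((α+β)^2)^(n+1) := this
        _ = (t^2*(α+β)^2) * ((α+β)^2)^n := by ring
    calc c (n+2) / (Nat.factorial (n+2) : ℝ)
        ≤ ((t^2*(α+β)^2) * ((α+β)^2)^n) / (n ! : ℝ) := by
          apply div_le_div₀ (by positivity) hnum hfac1 hfac2
      _ = (t^2*(α+β)^2) * (((α+β)^2)^n / n !) := by ring
  have := hasSum_le hbound hT2 hR
  linarith [this]

/-- with `ι : H → Γ(H)` the embedding of the one-particle subspace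
(characterised by `⟨ι f, ι g⟩ = ⟨f,g⟩` and `⟨ε f, ι g⟩ = ⟨f,g⟩ = ⟨ι f, ε g⟩`, since the
one-particle component of `ε f` is `f`), the refined estimate
`‖ε f − ε g − (f − g)‖ ≤ ‖f − g‖(‖f‖ + ‖g‖) exp(½(‖f‖ + ‖g‖)²)` holds. -/
theorem exponential_vectors_refined_estimate {H F : Type*}
    [NormedAddCommGroup H] [InnerProductSpace ℂ H]
    [NormedAddCommGroup F] [InnerProductSpace ℂ F]
    (ε : H → F) (ι : H →ₗ[ℂ] F)
    (hε : ∀ f g : H, ⟪ε f, ε g⟫_ℂ = Complex.exp ⟪f, g⟫_ℂ)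
    (hι : ∀ f g : H, ⟪ι f, ι g⟫_ℂ = ⟪f, g⟫_ℂ)
    (hει : ∀ f g : H, ⟪ε f, ι g⟫_ℂ = ⟪f, g⟫_ℂ)
    (hιε : ∀ f g : H, ⟪ι f, ε g⟫_ℂ = ⟪f, g⟫_ℂ) :
    ∀ f g : H, ‖ε f - ε g - ι (f - g)‖ ≤
      ‖f - g‖ * (‖f‖ + ‖g‖) * Real.exp ((1 / 2) * (‖f‖ + ‖g‖) ^ 2) := by
  intro f g
  set z : ℂ := ⟪f, g⟫_ℂ with hzdef
  set w : F := ε f - ε g - ι (f - g) with hwdef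
  -- basic inner product identities
  have hff : ⟪f, f⟫_ℂ = ((‖f‖^2 : ℝ) : ℂ) := by
    rw [inner_self_eq_norm_sq_to_K]; norm_cast
  have hgg : ⟪g, g⟫_ℂ = ((‖g‖^2 : ℝ) : ℂ) := by
    rw [inner_self_eq_norm_sq_to_K]; norm_cast
  have hgf : ⟪g, f⟫_ℂ = (starRingEnd ℂ) z := by rw [hzdef, inner_conj_symm]
  -- the squared norm of w
  have hww : ⟪w, w⟫_ℂ = Complex.exp ((‖f‖^2 : ℝ) : ℂ) + Complex.exp ((‖g‖^2 : ℝ) : ℂ)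
      - Complex.exp z - Complex.exp ((starRingEnd ℂ) z)
      - (((‖f‖^2 : ℝ) : ℂ) + ((‖g‖^2 : ℝ) : ℂ) - z - (starRingEnd ℂ) z) := by
    rw [hwdef]
    simp only [map_sub, inner_sub_left, inner_sub_right, hε, hι, hει, hιε, hff, hgg, hgf,
      ← hzdef]
    ring
  have hwnorm : ⟪w, w⟫_ℂ = ((‖w‖^2 : ℝ) : ℂ) := by
    rw [inner_self_eq_norm_sq_to_K]; norm_cast
  have hre : (‖w‖^2 : ℝ) = Real.exp (‖f‖^2) + Real.exp (‖g‖^2)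
      - 2*(Complex.exp z).re - (‖f‖^2 + ‖g‖^2 - 2*z.re) := by
    have h := congrArg Complex.re (hwnorm.symm.trans hww)
    simp only [Complex.ofReal_re, Complex.add_re, Complex.sub_re, ← Complex.ofReal_exp,
      Complex.exp_conj, Complex.conj_re] at h
    linarith [h]
  -- relation for ‖f - g‖²
  have hs : ‖f‖^2 + ‖g‖^2 - 2*z.re = ‖f - g‖^2 := by
    have h1 : ⟪f - g, f - g⟫_ℂ = ((‖f - g‖^2 : ℝ) : ℂ) := by
      rw [inner_self_eq_norm_sq_to_K]; norm_cast
    have h2 : ⟪f - g, f - g⟫_ℂ = ((‖f‖^2 : ℝ) : ℂ) + ((‖g‖^2 : ℝ) : ℂ) - z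
        - (starRingEnd ℂ) z := by
      simp only [inner_sub_left, inner_sub_right, hff, hgg, hgf, ← hzdef]
      ring
    have h := congrArg Complex.re (h1.symm.trans h2)
    simp only [Complex.ofReal_re, Complex.add_re, Complex.sub_re, Complex.conj_re] at h
    linarith [h]
  have hz : ‖z‖ ≤ ‖f‖ * ‖g‖ := by
    exact norm_inner_le_norm f g
  have hcore := core_estimate ‖f‖ ‖g‖ ‖f - g‖ (norm_nonneg f) (norm_nonneg g)
    (norm_nonneg (f - g)) z hz hs
  have hwle : ‖w‖^2 ≤ ‖f - g‖^2 * (‖f‖ + ‖g‖)^2 * Real.exp ((‖f‖ + ‖g‖)^2) := by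
    rw [hre, hs]; exact hcore
  -- conclude
  set t : ℝ := ‖f - g‖
  set K : ℝ := ‖f‖ + ‖g‖
  have hKnn : 0 ≤ K := by positivity
  have hRnn : 0 ≤ t * K * Real.exp ((1/2) * K^2) := by positivity
  have hsq : (t * K * Real.exp ((1/2) * K^2))^2 = t^2 * K^2 * Real.exp (K^2) := by
    rw [mul_pow, mul_pow, sq (Real.exp _), ← Real.exp_add]
    congr 1
    ring
  have hfinal : ‖w‖^2 ≤ (t * K * Real.exp ((1/2) * K^2))^2 := by
    rw [hsq]; linarith [hwle]
  have := Real.sqrt_le_sqrt hfinal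
  rwa [Real.sqrt_sq (norm_nonneg w), Real.sqrt_sq hRnn] at this
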